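/- For every H with 0 < H < 1, the limit as n → ∞ of n^(2−2H)·∑_{q=n}^{∞} q^(H−2)·C(2q, q−n)/C(2q, q) equals Γ(1−H). -/

import Mathlib

open Filter MeasureTheory Set Real Finset

namespace Stmt5

noncomputable def Rprod (n q : ℕ) : ℝ := ∏ j ∈ Finset.range n, (((q:ℝ) - j)/((q:ℝ) + j + 1))

lemma choose_ratio : ∀ (n q : ℕ), n ≤ q →
    ((2*q).choose (q-n) : ℝ) / ((2*q).choose q : ℝ) = Rprod n q := by
  intro n
  induction n with
  | zero =>
    intro q _
    have h : (0:ℝ) < ((2*q).choose q : ℝ) := by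
      exact_mod_cast Nat.choose_pos (by omega)
    simp [Rprod, div_self h.ne']
  | succ n ih =>
    intro q h
    have h' : n ≤ q := by omega
    have hq1 : q - (n+1) + 1 = q - n := by omega
    have h2 : 2*q - (q-(n+1)) = q + n + 1 := by omega
    have key : (2*q).choose (q-n) * (q - n) = (2*q).choose (q-(n+1)) * (q+n+1) := by
      have := Nat.choose_succ_right_eq (2*q) (q-(n+1))
      rw [hq1, h2] at this
      have h3 : q - (n+1) + 1 = q - n := hq1
      omega
    have keyR : ((2*q).choose (q-(n+1)) : ℝ) * ((q:ℝ) + n + 1)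
        = ((2*q).choose (q-n) : ℝ) * ((q:ℝ) - n) := by
      have := congrArg (fun x : ℕ => (x : ℝ)) key
      push_cast [Nat.cast_sub h'] at this
      linarith [this]
    have hqn : (0:ℝ) < (q:ℝ) + n + 1 := by positivity
    have hc : (0:ℝ) < ((2*q).choose q : ℝ) := by
      exact_mod_cast Nat.choose_pos (by omega)
    have : Rprod (n+1) q = Rprod n q * (((q:ℝ) - n)/((q:ℝ) + n + 1)) := by
      rw [Rprod, Finset.prod_range_succ]; rfl
    rw [this, ← ih q h']
    field_simp
    linear_combination keyR

lemma sum_odd (n : ℕ) : ∑ j ∈ Finset.range n, (2*(j:ℝ)+1) = (n:ℝ)^2 := by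
  induction n with
  | zero => simp
  | succ n ih => rw [Finset.sum_range_succ, ih]; push_cast; ring

lemma Rprod_nonneg {n q : ℕ} (h : n ≤ q) : 0 ≤ Rprod n q := by
  apply Finset.prod_nonneg
  intro j hj
  have hj' : (j:ℝ) ≤ (q:ℝ) - 1 := by
    have : j + 1 ≤ q := by have := Finset.mem_range.1 hj; omega
    have := (Nat.cast_le (α := ℝ)).2 this
    push_cast at this; linarith
  apply div_nonneg (by linarith) (by positivity)

lemma Rprod_le_one {n q : ℕ} (h : n ≤ q) : Rprod n q ≤ 1 := by
  apply Finset.prod_le_one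
  · intro j hj
    have : j + 1 ≤ q := by have := Finset.mem_range.1 hj; omega
    have := (Nat.cast_le (α := ℝ)).2 this
    push_cast at this
    apply div_nonneg (by linarith) (by positivity)
  · intro j hj
    have hq : (0:ℝ) < (q:ℝ) + j + 1 := by positivity
    rw [div_le_one hq]
    have : (0:ℝ) ≤ (j:ℝ) := by positivity
    linarith

lemma Rprod_le {n q : ℕ} (h : n ≤ q) : Rprod n q ≤ Real.exp (-((n:ℝ)^2/((q:ℝ)+n))) := by
  have hstep : ∀ j ∈ Finset.range n,
      ((q:ℝ) - j)/((q:ℝ) + j + 1) ≤ Real.exp (-(2*(j:ℝ)+1)/((q:ℝ)+n)) := by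
    intro j hj
    have hjn : j + 1 ≤ n := by have := Finset.mem_range.1 hj; omega
    have hjnR : (j:ℝ) + 1 ≤ (n:ℝ) := by exact_mod_cast hjn
    have hq : (0:ℝ) < (q:ℝ) + j + 1 := by positivity
    have hqn : (0:ℝ) < (q:ℝ) + n := by
      have : (0:ℝ) ≤ (q:ℝ) := by positivity
      linarith
    -- (q-j)/(q+j+1) = 1 - (2j+1)/(q+j+1)
    have heq : ((q:ℝ) - j)/((q:ℝ) + j + 1) = 1 - (2*(j:ℝ)+1)/((q:ℝ) + j + 1) := by
      field_simp
      ring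
    rw [heq]
    have h1 : 1 - (2*(j:ℝ)+1)/((q:ℝ) + j + 1) ≤ Real.exp (-((2*(j:ℝ)+1)/((q:ℝ) + j + 1))) := by
      have := Real.add_one_le_exp (-((2*(j:ℝ)+1)/((q:ℝ) + j + 1)))
      linarith
    refine h1.trans (Real.exp_le_exp.2 ?_)
    rw [neg_div, neg_le_neg_iff]
    apply div_le_div_of_nonneg_left (by positivity) hq
    linarith
  calc Rprod n q ≤ ∏ j ∈ Finset.range n, Real.exp (-(2*(j:ℝ)+1)/((q:ℝ)+n)) := by
        apply Finset.prod_le_prod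
        · intro j hj
          have : j + 1 ≤ q := by have := Finset.mem_range.1 hj; omega
          have := (Nat.cast_le (α := ℝ)).2 this
          push_cast at this
          apply div_nonneg (by linarith) (by positivity)
        · exact hstep
    _ = Real.exp (-((n:ℝ)^2/((q:ℝ)+n))) := by
        rw [← Real.exp_sum]
        congr 1
        rw [← Finset.sum_div, ← sum_odd n, Finset.sum_neg_distrib, neg_div]

lemma exp_lb {x : ℝ} (h0 : 0 ≤ x) (h2 : x ≤ 1/2) : Real.exp (-(x+2*x^2)) ≤ 1 - x := by
  have h1 : 1 + (x+2*x^2) ≤ Real.exp (x+2*x^2) := by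
    have := Real.add_one_le_exp (x+2*x^2); linarith
  have hx : 0 < 1 - x := by linarith
  have key : 1/(1-x) ≤ Real.exp (x+2*x^2) := by
    rw [div_le_iff₀ hx]
    nlinarith
  rw [Real.exp_neg]
  have hpos : 0 < 1/(1-x) := by positivity
  calc (Real.exp (x+2*x^2))⁻¹ ≤ (1/(1-x))⁻¹ := by
        apply inv_anti₀ hpos key
    _ = 1 - x := by rw [one_div, inv_inv]

lemma Rprod_ge {n q : ℕ} (hn : 1 ≤ n) (h4 : 4*n ≤ q) :
    Real.exp (-((n:ℝ)^2/(q:ℝ) + 8*(n:ℝ)^3/(q:ℝ)^2)) ≤ Rprod n q := by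
  have hq0 : (0:ℝ) < (q:ℝ) := by
    have : 0 < q := by omega
    exact_mod_cast this
  have hnq : (n:ℝ) ≤ (q:ℝ)/4 := by
    have : (4*n : ℕ) ≤ q := h4
    have := (Nat.cast_le (α := ℝ)).2 this
    push_cast at this; linarith
  -- per factor: exp(-(x_j + 2 x_j^2)) ≤ 1 - x_j = factor, where x_j = (2j+1)/(q+j+1)
  have hstep : ∀ j ∈ Finset.range n,
      Real.exp (-((2*(j:ℝ)+1)/(q:ℝ) + 8*(n:ℝ)^2/(q:ℝ)^2)) ≤ ((q:ℝ) - j)/((q:ℝ) + j + 1) := by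
    intro j hj
    have hjn : j + 1 ≤ n := by have := Finset.mem_range.1 hj; omega
    have hjnR : (j:ℝ) + 1 ≤ (n:ℝ) := by exact_mod_cast hjn
    have hjR : (0:ℝ) ≤ (j:ℝ) := by positivity
    set x : ℝ := (2*(j:ℝ)+1)/((q:ℝ) + j + 1) with hxdef
    have hqj : (0:ℝ) < (q:ℝ) + j + 1 := by positivity
    have hx0 : 0 ≤ x := by positivity
    have hxle : x ≤ 2*(n:ℝ)/(q:ℝ) := by
      rw [hxdef, div_le_div_iff₀ hqj hq0]
      nlinarith
    have hx2 : x ≤ 1/2 := by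
      refine hxle.trans ?_
      rw [div_le_iff₀ hq0]; nlinarith
    have heq : ((q:ℝ) - j)/((q:ℝ) + j + 1) = 1 - x := by
      rw [hxdef]; field_simp; ring
    rw [heq]
    refine le_trans (Real.exp_le_exp.2 ?_) (exp_lb hx0 hx2)
    rw [neg_le_neg_iff]
    have hxq : x ≤ (2*(j:ℝ)+1)/(q:ℝ) := by
      rw [hxdef]
      apply div_le_div_of_nonneg_left (by positivity) hq0
      linarith
    have hx2q : x^2 ≤ 4*(n:ℝ)^2/(q:ℝ)^2 := by
      have h1 : x^2 ≤ (2*(n:ℝ)/(q:ℝ))^2 := by nlinarith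
      have : (2*(n:ℝ)/(q:ℝ))^2 = 4*(n:ℝ)^2/(q:ℝ)^2 := by field_simp; ring
      linarith
    have h8 : 2*x^2 ≤ 8*(n:ℝ)^2/(q:ℝ)^2 := by
      have : 8*(n:ℝ)^2/(q:ℝ)^2 = 2*(4*(n:ℝ)^2/(q:ℝ)^2) := by ring
      linarith
    linarith
  calc Real.exp (-((n:ℝ)^2/(q:ℝ) + 8*(n:ℝ)^3/(q:ℝ)^2))
      = ∏ j ∈ Finset.range n, Real.exp (-((2*(j:ℝ)+1)/(q:ℝ) + 8*(n:ℝ)^2/(q:ℝ)^2)) := by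
        rw [← Real.exp_sum]
        congr 1
        have hsum : ∑ j ∈ Finset.range n, ((2*(j:ℝ)+1)/(q:ℝ) + 8*(n:ℝ)^2/(q:ℝ)^2)
            = (n:ℝ)^2/(q:ℝ) + 8*(n:ℝ)^3/(q:ℝ)^2 := by
          rw [Finset.sum_add_distrib, ← Finset.sum_div, sum_odd, Finset.sum_const,
            Finset.card_range, nsmul_eq_mul]
          ring
        rw [← hsum, Finset.sum_neg_distrib]
    _ ≤ Rprod n q := by
        apply Finset.prod_le_prod
        · intro j hj; positivity
        · exact hstep


noncomputable def qq (n : ℕ) (t : ℝ) : ℕ := n + ⌊(n:ℝ)^2 * t⌋₊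

noncomputable def F (H : ℝ) (n : ℕ) (t : ℝ) : ℝ :=
  (n:ℝ)^(4-2*H) * (((qq n t : ℕ):ℝ)^(H-2) * Rprod n (qq n t))

lemma n_le_qq (n : ℕ) (t : ℝ) : n ≤ qq n t := Nat.le_add_right _ _

lemma qq_lb {n : ℕ} {t : ℝ} (hn : 1 ≤ n) (ht : 0 ≤ t) : (n:ℝ)^2 * t ≤ (qq n t : ℝ) := by
  have h := Nat.lt_floor_add_one ((n:ℝ)^2 * t)
  have hnR : (1:ℝ) ≤ (n:ℝ) := by exact_mod_cast hn
  have : (qq n t : ℝ) = (n:ℝ) + (⌊(n:ℝ)^2 * t⌋₊ : ℝ) := by rw [qq]; push_cast; ring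
  rw [this]
  linarith

lemma qq_ub {n : ℕ} {t : ℝ} (ht : 0 ≤ t) : (qq n t : ℝ) ≤ (n:ℝ)^2 * t + n := by
  have h := Nat.floor_le (by positivity : (0:ℝ) ≤ (n:ℝ)^2 * t)
  have : (qq n t : ℝ) = (n:ℝ) + (⌊(n:ℝ)^2 * t⌋₊ : ℝ) := by rw [qq]; push_cast; ring
  rw [this]
  linarith

lemma tendsto_qq_div (t : ℝ) (ht : 0 < t) :
    Tendsto (fun n : ℕ => (qq n t : ℝ)/(n:ℝ)^2) atTop (nhds t) := by
  have hupper : Tendsto (fun n : ℕ => t + 1/(n:ℝ)) atTop (nhds t) := by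
    have h := (tendsto_const_nhds (α := ℕ) (f := atTop) (x := t)).add
      tendsto_one_div_atTop_nhds_zero_nat
    simpa using h
  refine tendsto_of_tendsto_of_tendsto_of_le_of_le' tendsto_const_nhds hupper ?_ ?_
  · filter_upwards [eventually_ge_atTop 1] with n hn
    have hnR : (1:ℝ) ≤ (n:ℝ) := by exact_mod_cast hn
    have hn2 : (0:ℝ) < (n:ℝ)^2 := by positivity
    rw [le_div_iff₀ hn2]
    have := qq_lb hn ht.le
    linarith
  · filter_upwards [eventually_ge_atTop 1] with n hn
    have hnR : (1:ℝ) ≤ (n:ℝ) := by exact_mod_cast hn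
    have hn2 : (0:ℝ) < (n:ℝ)^2 := by positivity
    rw [div_le_iff₀ hn2]
    have := qq_ub (n := n) ht.le
    have hsq : (t + 1/(n:ℝ)) * (n:ℝ)^2 = (n:ℝ)^2 * t + (n:ℝ)^2/(n:ℝ) := by ring
    have hnn : (n:ℝ)^2/(n:ℝ) = (n:ℝ) := by
      field_simp [pow_two]
    rw [hsq, hnn]
    linarith

lemma tendsto_n2_div_qq (t : ℝ) (ht : 0 < t) :
    Tendsto (fun n : ℕ => (n:ℝ)^2/((qq n t : ℝ))) atTop (nhds t⁻¹) := by
  have h := (tendsto_qq_div t ht).inv₀ (ne_of_gt ht)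
  refine h.congr' ?_
  filter_upwards [eventually_ge_atTop 1] with n hn
  have hq : 0 < qq n t := lt_of_lt_of_le hn (n_le_qq n t)
  have hqR : (0:ℝ) < (qq n t : ℝ) := by exact_mod_cast hq
  have hnR : (0:ℝ) < (n:ℝ) := by exact_mod_cast hn
  rw [inv_div]

lemma eventually_qq_big (t : ℝ) (ht : 0 < t) :
    ∀ᶠ n : ℕ in atTop, 4 * n ≤ qq n t := by
  have h : Tendsto (fun n : ℕ => (n:ℝ) * t) atTop atTop :=
    tendsto_natCast_atTop_atTop.atTop_mul_const ht
  filter_upwards [h.eventually_ge_atTop 3, eventually_ge_atTop 1] with n hn3 hn1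
  have : (3 * n : ℕ) ≤ ⌊(n:ℝ)^2 * t⌋₊ := by
    rw [Nat.le_floor_iff (by positivity)]
    push_cast
    have hnR : (1:ℝ) ≤ (n:ℝ) := by exact_mod_cast hn1
    nlinarith
  rw [qq]
  omega

lemma R_tendsto (t : ℝ) (ht : 0 < t) :
    Tendsto (fun n : ℕ => Rprod n (qq n t)) atTop (nhds (Real.exp (-t⁻¹))) := by
  have hcont : Continuous (fun x : ℝ => Real.exp (-x)) := Real.continuous_exp.comp continuous_neg
  -- upper bound sequence
  have hupper : Tendsto (fun n : ℕ => Real.exp (-((n:ℝ)^2/((qq n t : ℝ) + n)))) atTop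
      (nhds (Real.exp (-t⁻¹))) := by
    have hbase : Tendsto (fun n : ℕ => (n:ℝ)^2/((qq n t : ℝ) + n)) atTop (nhds t⁻¹) := by
      have h1 : Tendsto (fun n : ℕ => ((qq n t : ℝ) + n)/(n:ℝ)^2) atTop (nhds t) := by
        have := (tendsto_qq_div t ht).add tendsto_one_div_atTop_nhds_zero_nat
        rw [add_zero] at this
        refine this.congr' ?_
        filter_upwards [eventually_ge_atTop 1] with n hn
        have hnR : (0:ℝ) < (n:ℝ) := by exact_mod_cast hn
        field_simp
      have := h1.inv₀ (ne_of_gt ht)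
      refine this.congr' ?_
      filter_upwards [eventually_ge_atTop 1] with n hn
      rw [inv_div]
    exact (hcont.tendsto _).comp hbase
  -- lower bound sequence
  have hlower : Tendsto
      (fun n : ℕ => Real.exp (-((n:ℝ)^2/(qq n t : ℝ) + 8*(n:ℝ)^3/((qq n t : ℝ))^2))) atTop
      (nhds (Real.exp (-t⁻¹))) := by
    have hbase : Tendsto (fun n : ℕ => (n:ℝ)^2/(qq n t : ℝ) + 8*(n:ℝ)^3/((qq n t : ℝ))^2)
        atTop (nhds t⁻¹) := by
      have h2 : Tendsto (fun n : ℕ => 8*(n:ℝ)^3/((qq n t : ℝ))^2) atTop (nhds 0) := by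
        have h3 : Tendsto (fun n : ℕ => (8/(n:ℝ)) * ((n:ℝ)^2/(qq n t : ℝ))^2) atTop
            (nhds (0 * (t⁻¹)^2)) := by
          apply Tendsto.mul
          · have h8 := tendsto_one_div_atTop_nhds_zero_nat.const_mul (8:ℝ)
            rw [mul_zero] at h8
            refine h8.congr fun k => ?_
            ring
          · exact (tendsto_n2_div_qq t ht).pow 2
        rw [zero_mul] at h3
        refine h3.congr' ?_
        filter_upwards [eventually_ge_atTop 1] with n hn
        have hq : 0 < qq n t := lt_of_lt_of_le hn (n_le_qq n t)
        have hqR : (0:ℝ) < (qq n t : ℝ) := by exact_mod_cast hq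
        have hnR : (0:ℝ) < (n:ℝ) := by exact_mod_cast hn
        field_simp
      have := (tendsto_n2_div_qq t ht).add h2
      rw [add_zero] at this
      exact this
    exact (hcont.tendsto _).comp hbase
  refine tendsto_of_tendsto_of_tendsto_of_le_of_le' hlower hupper ?_ ?_
  · filter_upwards [eventually_ge_atTop 1, eventually_qq_big t ht] with n hn hbig
    exact Rprod_ge hn hbig
  · filter_upwards [eventually_ge_atTop 1] with n hn
    exact Rprod_le (n_le_qq n t)

lemma F_eq (H : ℝ) {n : ℕ} {t : ℝ} (hn : 1 ≤ n) :
    F H n t = ((qq n t : ℝ)/(n:ℝ)^2)^(H-2) * Rprod n (qq n t) := by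
  have hnR : (0:ℝ) < (n:ℝ) := by exact_mod_cast hn
  have hq : 0 < qq n t := lt_of_lt_of_le hn (n_le_qq n t)
  have hqR : (0:ℝ) ≤ (qq n t : ℝ) := by positivity
  have h1 : (((n:ℝ)^2 : ℝ))^(H-2) = (n:ℝ)^(2*(H-2)) := by
    rw [← Real.rpow_natCast (n:ℝ) 2, ← Real.rpow_mul hnR.le]
    norm_num
  have h2 : (n:ℝ)^(4-2*H) = ((((n:ℝ)^2 : ℝ))^(H-2))⁻¹ := by
    rw [h1, ← Real.rpow_neg hnR.le]
    congr 1
    ring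
  rw [F, Real.div_rpow hqR (by positivity), h2, div_eq_mul_inv]
  ring

lemma F_tendsto (H : ℝ) (t : ℝ) (ht : 0 < t) :
    Tendsto (fun n : ℕ => F H n t) atTop (nhds (t^(H-2) * Real.exp (-t⁻¹))) := by
  have h := ((tendsto_qq_div t ht).rpow_const (p := H-2) (Or.inl (ne_of_gt ht))).mul (R_tendsto t ht)
  refine h.congr' ?_
  filter_upwards [eventually_ge_atTop 1] with n hn
  exact (F_eq H hn).symm

lemma sq_exp_le {x : ℝ} (hx : 0 ≤ x) : x^2 * Real.exp (-x) ≤ 4 := by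
  have h := Real.add_one_le_exp (x/2)
  have h2 : Real.exp (x/2) * Real.exp (x/2) = Real.exp x := by
    rw [← Real.exp_add]; ring_nf
  have hx2 : x^2 ≤ 4 * Real.exp x := by nlinarith [Real.exp_pos (x/2)]
  rw [Real.exp_neg]
  calc x^2 * (Real.exp x)⁻¹ ≤ (4 * Real.exp x) * (Real.exp x)⁻¹ := by
        apply mul_le_mul_of_nonneg_right hx2 (by positivity)
    _ = 4 := by field_simp

lemma F_nonneg (H : ℝ) (n : ℕ) (t : ℝ) : 0 ≤ F H n t := by
  have := Rprod_nonneg (n_le_qq n t)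
  rw [F]
  have h1 : (0:ℝ) ≤ (n:ℝ)^(4-2*H) := Real.rpow_nonneg (by positivity) _
  have h2 : (0:ℝ) ≤ ((qq n t : ℕ):ℝ)^(H-2) := Real.rpow_nonneg (by positivity) _
  positivity

lemma F_bound {H : ℝ} (h0 : 0 < H) (h1 : H < 1) {n : ℕ} {t : ℝ} (hn : 1 ≤ n) (ht : 0 < t) :
    F H n t ≤ if t ≤ 1 then (36:ℝ) else t^(H-2) := by
  have hnR : (1:ℝ) ≤ (n:ℝ) := by exact_mod_cast hn
  have hnpos : (0:ℝ) < (n:ℝ) := by linarith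
  have hq : 0 < qq n t := lt_of_lt_of_le hn (n_le_qq n t)
  have hqR : (0:ℝ) < (qq n t : ℝ) := by exact_mod_cast hq
  have hqlb := qq_lb hn ht.le
  have hqub := qq_ub (n := n) ht.le
  have hRle := Rprod_le (n_le_qq n t)
  have hR0 := Rprod_nonneg (n_le_qq n t)
  have hR1 := Rprod_le_one (n_le_qq n t)
  have hn2 : (0:ℝ) < (n:ℝ)^2 := by positivity
  have hA_le : ((qq n t : ℝ)/(n:ℝ)^2)^(H-2) ≤ t^(H-2) := by
    apply Real.rpow_le_rpow_of_nonpos ht _ (by linarith)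
    rw [le_div_iff₀ hn2]
    linarith
  have hA0 : (0:ℝ) ≤ ((qq n t : ℝ)/(n:ℝ)^2)^(H-2) := Real.rpow_nonneg (by positivity) _
  by_cases hcase : t ≤ 1
  · rw [if_pos hcase]
    by_cases hsmall : (n:ℝ) * t < 1
    · -- t < 1/n : use crude bound n^(2-H) exp(-n/3) ≤ 36
      have hq2n : (qq n t : ℝ) ≤ 2*(n:ℝ) := by nlinarith
      have hexp : Real.exp (-((n:ℝ)^2/((qq n t : ℝ)+n))) ≤ Real.exp (-((n:ℝ)/3)) := by
        apply Real.exp_le_exp.2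
        rw [neg_le_neg_iff]
        rw [le_div_iff₀ (by linarith)]
        nlinarith
      have hqn : ((qq n t : ℕ):ℝ)^(H-2) ≤ (n:ℝ)^(H-2) :=
        Real.rpow_le_rpow_of_nonpos hnpos (by exact_mod_cast Nat.cast_le.2 (n_le_qq n t)) (by linarith)
      have hF : F H n t ≤ (n:ℝ)^(4-2*H) * ((n:ℝ)^(H-2) * Real.exp (-((n:ℝ)/3))) := by
        rw [F]
        apply mul_le_mul_of_nonneg_left _ (Real.rpow_nonneg hnpos.le _)
        apply mul_le_mul hqn (hRle.trans hexp) hR0 (Real.rpow_nonneg hnpos.le _)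
      have hcomb : (n:ℝ)^(4-2*H) * (n:ℝ)^(H-2) = (n:ℝ)^(2-H) := by
        rw [← Real.rpow_add hnpos]
        congr 1; ring
      have hle2 : (n:ℝ)^(2-H) ≤ (n:ℝ)^2 := by
        rw [← Real.rpow_natCast (n:ℝ) 2]
        apply Real.rpow_le_rpow_of_exponent_le hnR
        push_cast; linarith
      have hfin : (n:ℝ)^2 * Real.exp (-((n:ℝ)/3)) ≤ 36 := by
        have := sq_exp_le (x := (n:ℝ)/3) (by positivity)
        nlinarith [Real.exp_pos (-((n:ℝ)/3)), Real.exp_nonneg (-((n:ℝ)/3))]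
      calc F H n t ≤ (n:ℝ)^(4-2*H) * ((n:ℝ)^(H-2) * Real.exp (-((n:ℝ)/3))) := hF
        _ = (n:ℝ)^(2-H) * Real.exp (-((n:ℝ)/3)) := by rw [← hcomb]; ring
        _ ≤ (n:ℝ)^2 * Real.exp (-((n:ℝ)/3)) := by
            apply mul_le_mul_of_nonneg_right hle2 (Real.exp_nonneg _)
        _ ≤ 36 := hfin
    · -- 1/n ≤ t
      push_neg at hsmall
      have hexp : Real.exp (-((n:ℝ)^2/((qq n t : ℝ)+n))) ≤ Real.exp (-(1/(3*t))) := by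
        apply Real.exp_le_exp.2
        rw [neg_le_neg_iff]
        rw [div_le_div_iff₀ (by positivity) (by linarith)]
        nlinarith
      have hF : F H n t ≤ t^(H-2) * Real.exp (-(1/(3*t))) := by
        rw [F_eq H hn]
        apply mul_le_mul hA_le (hRle.trans hexp) hR0 (Real.rpow_nonneg ht.le _)
      refine hF.trans ?_
      -- t^(H-2) * exp(-1/(3t)) ≤ 36 for 0 < t ≤ 1
      set s : ℝ := 1/t with hs
      have hs1 : 1 ≤ s := by rw [hs]; rw [le_div_iff₀ ht]; linarith
      have hspos : 0 < s := by linarith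
      have hts : t = s⁻¹ := by rw [hs]; field_simp
      have h1 : t^(H-2) = s^(2-H) := by
        rw [hts, ← Real.rpow_neg_one s, ← Real.rpow_mul hspos.le]
        congr 1; ring
      have h2 : (1/(3*t)) = s/3 := by rw [hs]; field_simp
      rw [h1, h2]
      have h3 : s^(2-H) ≤ s^2 := by
        rw [← Real.rpow_natCast s 2]
        apply Real.rpow_le_rpow_of_exponent_le hs1
        push_cast; linarith
      have h4 : s^2 * Real.exp (-(s/3)) ≤ 36 := by
        have := sq_exp_le (x := s/3) (by positivity)
        nlinarith [Real.exp_nonneg (-(s/3))]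
      calc s^(2-H) * Real.exp (-(s/3)) ≤ s^2 * Real.exp (-(s/3)) := by
            apply mul_le_mul_of_nonneg_right h3 (Real.exp_nonneg _)
        _ ≤ 36 := h4
  · rw [if_neg hcase]
    rw [F_eq H hn]
    calc ((qq n t : ℝ)/(n:ℝ)^2)^(H-2) * Rprod n (qq n t)
        ≤ ((qq n t : ℝ)/(n:ℝ)^2)^(H-2) * 1 := by
          apply mul_le_mul_of_nonneg_left hR1 hA0
      _ = ((qq n t : ℝ)/(n:ℝ)^2)^(H-2) := mul_one _
      _ ≤ t^(H-2) := hA_le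


lemma Ico_union : (⋃ m : ℕ, Ico (m:ℝ) (m+1)) = Ici (0:ℝ) := by
  ext x
  simp only [Set.mem_iUnion, Set.mem_Ico, Set.mem_Ici]
  constructor
  · rintro ⟨m, hm, -⟩
    exact le_trans (by positivity) hm
  · intro hx
    exact ⟨⌊x⌋₊, Nat.floor_le hx, Nat.lt_floor_add_one x⟩

lemma Ico_pairwise : Pairwise (Function.onFun Disjoint (fun m : ℕ => Ico (m:ℝ) (m+1))) := by
  intro i j hij
  rw [Function.onFun, Set.Ico_disjoint_Ico]
  rcases hij.lt_or_gt with h | h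
  · have : (i:ℝ) + 1 ≤ (j:ℝ) := by exact_mod_cast Nat.succ_le_of_lt h
    refine le_trans (min_le_left _ _) (le_trans this (le_max_right _ _))
  · have : (j:ℝ) + 1 ≤ (i:ℝ) := by exact_mod_cast Nat.succ_le_of_lt h
    refine le_trans (min_le_right _ _) (le_trans this (le_max_left _ _))

/-- For summable nonnegative `g : ℕ → ℝ`, the step function `s ↦ g ⌊s⌋₊` integrates
to the sum over `[0, ∞)`. -/
lemma step_function_integral {g : ℕ → ℝ} (hnn : ∀ m, 0 ≤ g m) (hsum : Summable g) :
    IntegrableOn (fun s : ℝ => g ⌊s⌋₊) (Ici (0:ℝ)) ∧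
    ∫ s in Ici (0:ℝ), g ⌊s⌋₊ = ∑' m, g m := by
  have hmeas : Measurable (fun s : ℝ => g ⌊s⌋₊) :=
    measurable_from_nat.comp Nat.measurable_floor
  have hm : ∀ m : ℕ, MeasurableSet (Ico (m:ℝ) (m+1)) := fun m => measurableSet_Ico
  have heq : ∀ m : ℕ, ∀ s ∈ Ico (m:ℝ) (m+1), g ⌊s⌋₊ = g m := by
    intro m s hs
    rw [Nat.floor_eq_on_Ico m s hs]
  have hvol : ∀ m : ℕ, volume (Ico (m:ℝ) (m+1)) = 1 := by
    intro m
    rw [Real.volume_Ico]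
    simp
  -- lintegral computation
  have hlint : ∫⁻ s in Ici (0:ℝ), ENNReal.ofReal (g ⌊s⌋₊) = ENNReal.ofReal (∑' m, g m) := by
    rw [← Ico_union, lintegral_iUnion hm Ico_pairwise]
    have : ∀ m : ℕ, ∫⁻ s in Ico (m:ℝ) (m+1), ENNReal.ofReal (g ⌊s⌋₊) = ENNReal.ofReal (g m) := by
      intro m
      rw [setLIntegral_congr_fun (hm m) (fun s hs => by rw [heq m s hs]),
        setLIntegral_const, hvol m, mul_one]
    simp_rw [this]
    rw [ENNReal.ofReal_tsum_of_nonneg hnn hsum]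
  have hint : IntegrableOn (fun s : ℝ => g ⌊s⌋₊) (Ici (0:ℝ)) := by
    refine ⟨hmeas.aestronglyMeasurable, ?_⟩
    rw [hasFiniteIntegral_iff_ofReal (ae_of_all _ fun s => hnn _)]
    rw [hlint]
    exact ENNReal.ofReal_lt_top
  refine ⟨hint, ?_⟩
  have hint' : IntegrableOn (fun s : ℝ => g ⌊s⌋₊) (⋃ m : ℕ, Ico (m:ℝ) (m+1)) := by
    rw [Ico_union]; exact hint
  rw [← Ico_union, integral_iUnion hm Ico_pairwise hint']
  congr 1
  funext m
  rw [setIntegral_congr_fun (hm m) (heq m), setIntegral_const, measureReal_def, hvol m]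
  simp

lemma step_integral (H : ℝ) (hH : H < 1) (n : ℕ) (hn : 1 ≤ n) :
    (n : ℝ) ^ (2 - 2*H) * ∑' q : ℕ, (if n ≤ q then
        (q : ℝ) ^ (H - 2) * ((2*q).choose (q - n) : ℝ) / ((2*q).choose q : ℝ) else 0)
      = ∫ t in Ioi (0:ℝ), F H n t := by
  have hnR : (0:ℝ) < (n:ℝ) := by exact_mod_cast hn
  set a : ℕ → ℝ := fun q => (q:ℝ)^(H-2) * Rprod n q with ha
  set g : ℕ → ℝ := fun m => a (n + m) with hg
  have hnn : ∀ m, 0 ≤ g m := by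
    intro m
    apply mul_nonneg (Real.rpow_nonneg (by positivity) _)
    exact Rprod_nonneg (Nat.le_add_right n m)
  have hsum : Summable g := by
    have hbig : Summable (fun m : ℕ => ((n+m : ℕ):ℝ)^(H-2)) := by
      have h1 : Summable (fun k : ℕ => (k:ℝ)^(H-2)) :=
        Real.summable_nat_rpow.2 (by linarith)
      exact h1.comp_injective (add_right_injective n)
    apply Summable.of_nonneg_of_le hnn _ hbig
    intro m
    rw [hg]
    calc a (n + m) ≤ ((n+m : ℕ):ℝ)^(H-2) * 1 := by
          apply mul_le_mul_of_nonneg_left (Rprod_le_one (Nat.le_add_right n m))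
            (Real.rpow_nonneg (by positivity) _)
      _ = ((n+m : ℕ):ℝ)^(H-2) := mul_one _
  -- rewrite the tsum
  have htsum : (∑' q : ℕ, (if n ≤ q then
      (q : ℝ) ^ (H - 2) * ((2*q).choose (q - n) : ℝ) / ((2*q).choose q : ℝ) else 0))
      = ∑' m : ℕ, g m := by
    have h1 : (fun q : ℕ => (if n ≤ q then
        (q : ℝ) ^ (H - 2) * ((2*q).choose (q - n) : ℝ) / ((2*q).choose q : ℝ) else 0))
        = fun q : ℕ => (if n ≤ q then a q else 0) := by
      funext q
      split_ifs with h
      · rw [ha, mul_div_assoc, choose_ratio n q h]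
      · rfl
    rw [h1]
    have h2 : ∀ m : ℕ, (if n ≤ n + m then a (n + m) else 0) = g m := by
      intro m
      rw [if_pos (Nat.le_add_right n m)]
    rw [← Function.Injective.tsum_eq (f := fun q : ℕ => if n ≤ q then a q else 0)
      (add_right_injective n) ?_]
    · exact tsum_congr h2
    · intro q hq
      rw [Function.mem_support] at hq
      by_cases h : n ≤ q
      · exact ⟨q - n, by simp; omega⟩
      · exact absurd (if_neg h) hq
  obtain ⟨hint, hval⟩ := step_function_integral hnn hsum
  -- change of variables
  have hb : (0:ℝ) < (n:ℝ)^2 := by positivity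
  have hcv := integral_comp_mul_left_Ioi (fun s : ℝ => g ⌊s⌋₊) 0 hb
  rw [mul_zero] at hcv
  have h6 : ∫ t in Ioi (0:ℝ), g ⌊(n:ℝ)^2 * t⌋₊ = ((n:ℝ)^2)⁻¹ * ∫ s in Ioi (0:ℝ), g ⌊s⌋₊ := by
    simpa using hcv
  -- identify F with the rescaled step function
  have hFeq : ∀ t : ℝ, F H n t = (n:ℝ)^(4-2*H) * g ⌊(n:ℝ)^2 * t⌋₊ := by
    intro t
    rw [F, hg, ha, qq]
  have hpow : (n:ℝ)^(2-2*H) * (n:ℝ)^2 = (n:ℝ)^(4-2*H) := by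
    rw [← Real.rpow_natCast (n:ℝ) 2, ← Real.rpow_add hnR]
    congr 1
    push_cast
    ring
  calc (n : ℝ) ^ (2 - 2*H) * ∑' q : ℕ, (if n ≤ q then
        (q : ℝ) ^ (H - 2) * ((2*q).choose (q - n) : ℝ) / ((2*q).choose q : ℝ) else 0)
      = (n : ℝ) ^ (2 - 2*H) * ∑' m : ℕ, g m := by rw [htsum]
    _ = (n : ℝ) ^ (2 - 2*H) * ∫ s in Ici (0:ℝ), g ⌊s⌋₊ := by rw [hval]
    _ = (n : ℝ) ^ (2 - 2*H) * ∫ s in Ioi (0:ℝ), g ⌊s⌋₊ := by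
        rw [integral_Ici_eq_integral_Ioi]
    _ = (n : ℝ) ^ (2 - 2*H) * ((n:ℝ)^2 * ∫ t in Ioi (0:ℝ), g ⌊(n:ℝ)^2 * t⌋₊) := by
        rw [h6, ← mul_assoc ((n:ℝ)^2), mul_inv_cancel₀ (ne_of_gt hb), one_mul]
    _ = ∫ t in Ioi (0:ℝ), (n:ℝ)^(4-2*H) * g ⌊(n:ℝ)^2 * t⌋₊ := by
        rw [← integral_const_mul, ← integral_const_mul]
        congr 1
        funext s
        rw [← mul_assoc, hpow]
    _ = ∫ t in Ioi (0:ℝ), F H n t := by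
        refine setIntegral_congr_fun measurableSet_Ioi fun t _ => (hFeq t).symm

noncomputable def G (H : ℝ) (t : ℝ) : ℝ := if t ≤ 1 then (36:ℝ) else t^(H-2)

lemma G_integrable {H : ℝ} (h1 : H < 1) : IntegrableOn (G H) (Ioi (0:ℝ)) := by
  have hsplit : Set.Ioi (0:ℝ) = Set.Ioc 0 1 ∪ Set.Ioi 1 := (Set.Ioc_union_Ioi_eq_Ioi (by norm_num : (0:ℝ) ≤ 1)).symm
  rw [hsplit]
  apply IntegrableOn.union
  · apply IntegrableOn.congr_fun (f := fun _ : ℝ => (36:ℝ)) _ _ measurableSet_Ioc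
    · exact integrableOn_const measure_Ioc_lt_top.ne
    · intro t ht
      rw [G, if_pos ht.2]
  · apply IntegrableOn.congr_fun (f := fun t : ℝ => t^(H-2)) _ _ measurableSet_Ioi
    · exact integrableOn_Ioi_rpow_of_lt (by linarith) one_pos
    · intro t ht
      rw [G, if_neg (not_le.2 ht)]

lemma F_meas (H : ℝ) (n : ℕ) : Measurable (F H n) := by
  have h1 : Measurable (fun t : ℝ => qq n t) := by
    have : Measurable (fun t : ℝ => ⌊(n:ℝ)^2 * t⌋₊) :=
      (measurable_const.mul measurable_id).nat_floor
    exact measurable_from_nat.comp this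
  have h2 : Measurable (fun k : ℕ => (n:ℝ)^(4-2*H) * ((k:ℝ)^(H-2) * Rprod n k)) :=
    measurable_from_nat
  exact h2.comp h1

lemma gamma_int {H : ℝ} (h0 : 0 < H) (h1 : H < 1) :
    ∫ t in Ioi (0:ℝ), t^(H-2) * Real.exp (-t⁻¹) = Real.Gamma (1-H) := by
  rw [Real.Gamma_eq_integral (by linarith : (0:ℝ) < 1 - H)]
  rw [← integral_comp_rpow_Ioi (fun y : ℝ => Real.exp (-y) * y^(1-H-1)) (p := -1) (by norm_num)]
  apply setIntegral_congr_fun measurableSet_Ioi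
  intro x hx
  have hx0 : (0:ℝ) < x := hx
  have h2 : x ^ (-1 : ℝ) = x⁻¹ := Real.rpow_neg_one x
  have h3 : (x⁻¹) ^ (1-H-1) = x ^ H := by
    rw [Real.inv_rpow hx0.le]
    rw [show (1-H-1 : ℝ) = -H by ring, Real.rpow_neg hx0.le, inv_inv]
  have h4 : |(-1:ℝ)| * x ^ ((-1:ℝ) - 1) = x ^ (-2:ℝ) := by
    rw [abs_neg, abs_one, one_mul]
    norm_num
  simp only [smul_eq_mul, h2, h3, h4]
  have h5 : x ^ (H-2:ℝ) = x ^ (H:ℝ) * x ^ (-2:ℝ) := by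
    rw [← Real.rpow_add hx0]
    congr 1 <;> ring
  rw [h5]
  ring

end Stmt5


open Stmt5 in
/-- For `0 < H < 1`,
`n^(2−2H)·∑_{q=n}^{∞} q^(H−2)·C(2q, q−n)/C(2q, q) → Γ(1−H)` as `n → ∞`. -/
theorem stmt_5 (H : ℝ) (h0 : 0 < H) (h1 : H < 1) :
    Tendsto (fun n : ℕ => (n : ℝ) ^ (2 - 2*H) *
        ∑' q : ℕ, if n ≤ q then
          (q : ℝ) ^ (H - 2) * ((2*q).choose (q - n) : ℝ) / ((2*q).choose q : ℝ) else 0)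
      atTop (nhds (Real.Gamma (1 - H))) := by
  have hlim : Tendsto (fun n : ℕ => ∫ t in Set.Ioi (0:ℝ), F H n t) atTop
      (nhds (∫ t in Set.Ioi (0:ℝ), t^(H-2) * Real.exp (-t⁻¹))) := by
    apply MeasureTheory.tendsto_integral_filter_of_dominated_convergence (G H)
    · exact Eventually.of_forall fun n => (F_meas H n).aestronglyMeasurable
    · filter_upwards [eventually_ge_atTop 1] with n hn
      rw [MeasureTheory.ae_restrict_iff' measurableSet_Ioi]
      refine MeasureTheory.ae_of_all _ fun t ht => ?_
      rw [Real.norm_eq_abs, abs_of_nonneg (F_nonneg H n t)]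
      simpa [G] using F_bound h0 h1 hn ht
    · exact G_integrable h1
    · rw [MeasureTheory.ae_restrict_iff' measurableSet_Ioi]
      exact MeasureTheory.ae_of_all _ fun t ht => F_tendsto H t ht
  rw [gamma_int h0 h1] at hlim
  refine Tendsto.congr' ?_ hlim
  filter_upwards [eventually_ge_atTop 1] with n hn
  exact (step_integral H h1 n hn).symm
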